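/- Let F(z) = z·ln|z|² for z ≠ 0 and F(0) = 0. For all complex z, z̃ with |z| ≤ 1, |z̃| ≤ 1, and z ≠ 0, one has |F(z̃) − F(z)| ≤ |z − z̃|·(6 − ln|z|²). -/

import Mathlib

/-- Key radial estimate: `b * (log a² - log b²) ≤ 2 (a - b)` for `0 ≤ b ≤ a`, `0 < a`. -/
lemma key_aux (a b : ℝ) (ha : 0 < a) (hb : 0 ≤ b) (hba : b ≤ a) :
    b * (Real.log (a ^ 2) - Real.log (b ^ 2)) ≤ 2 * (a - b) := by
  rcases eq_or_lt_of_le hb with h0 | h0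
  · simp [← h0]; linarith
  · have h1 : Real.log (a ^ 2) - Real.log (b ^ 2) = 2 * Real.log (a / b) := by
      rw [Real.log_pow, Real.log_pow, Real.log_div (ne_of_gt ha) (ne_of_gt h0)]
      ring
    have h2 : Real.log (a / b) ≤ a / b - 1 :=
      Real.log_le_sub_one_of_pos (div_pos ha h0)
    have h3 : b * (a / b) = a := by field_simp
    calc b * (Real.log (a ^ 2) - Real.log (b ^ 2)) = 2 * (b * Real.log (a / b)) := by
          rw [h1]; ring
      _ ≤ 2 * (b * (a / b - 1)) := by nlinarith
      _ = 2 * (a - b) := by rw [mul_sub, h3]; ring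

/-- Almost-Lipschitz estimate for `F z = z ln |z|²`:
for `|z| ≤ 1`, `|z̃| ≤ 1`, `z ≠ 0`, `|F z̃ − F z| ≤ |z − z̃| (6 − ln|z|²)`. -/
theorem stmt_2 (z zt : ℂ) (hz : ‖z‖ ≤ 1) (hzt : ‖zt‖ ≤ 1) (hz0 : z ≠ 0) :
    ‖zt * (Real.log (‖zt‖ ^ 2) : ℂ) -
        z * (Real.log (‖z‖ ^ 2) : ℂ)‖ ≤
      ‖z - zt‖ * (6 - Real.log (‖z‖ ^ 2)) := by
  set r := ‖z‖ with hrdef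
  set s := ‖zt‖ with hsdef
  set Lr := Real.log (r ^ 2) with hLr
  set Ls := Real.log (s ^ 2) with hLs
  have hr0 : 0 < r := norm_pos_iff.mpr hz0
  have hs0 : 0 ≤ s := norm_nonneg zt
  have hLr0 : Lr ≤ 0 := Real.log_nonpos (by positivity) (by nlinarith)
  have hLs0 : Ls ≤ 0 := Real.log_nonpos (by positivity) (by nlinarith)
  have habs : ‖zt - z‖ = ‖z - zt‖ := norm_sub_rev zt z
  have hD : 0 ≤ ‖z - zt‖ := norm_nonneg _
  have hdiff : |r - s| ≤ ‖z - zt‖ := by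
    have := abs_norm_sub_norm_le z zt
    exact this
  rcases le_total s r with hsr | hsr
  · -- |zt| ≤ |z|
    have hid : zt * (Ls : ℂ) - z * (Lr : ℂ) = (zt - z) * (Lr : ℂ) + zt * ((Ls : ℂ) - (Lr : ℂ)) := by
      ring
    have hk : s * |Ls - Lr| ≤ 2 * (r - s) := by
      rcases eq_or_lt_of_le hs0 with h0 | h0
      · simp [← h0]; linarith
      · have hmono : Ls ≤ Lr := Real.log_le_log (by positivity) (by nlinarith)
        rw [abs_of_nonpos (by linarith : Ls - Lr ≤ 0)]
        have := key_aux r s hr0 hs0 hsr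
        linarith
    have hrs : r - s ≤ ‖z - zt‖ := le_trans (le_abs_self _) hdiff
    calc ‖zt * (Ls : ℂ) - z * (Lr : ℂ)‖
        ≤ ‖(zt - z) * (Lr : ℂ)‖ + ‖zt * ((Ls : ℂ) - (Lr : ℂ))‖ := by
          rw [hid]; exact norm_add_le _ _
      _ = ‖z - zt‖ * |Lr| + s * |Ls - Lr| := by
          rw [norm_mul, norm_mul, habs, ← Complex.ofReal_sub, Complex.norm_real, Complex.norm_real, Real.norm_eq_abs, Real.norm_eq_abs]
      _ ≤ ‖z - zt‖ * (-Lr) + 2 * ‖z - zt‖ := by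
          rw [abs_of_nonpos hLr0]; nlinarith
      _ ≤ ‖z - zt‖ * (6 - Lr) := by nlinarith
  · -- |z| ≤ |zt|
    have hs0' : 0 < s := lt_of_lt_of_le hr0 hsr
    have hmono : Lr ≤ Ls := by
      rw [hLr, hLs]
      exact Real.log_le_log (by positivity) (by nlinarith)
    have hid : zt * (Ls : ℂ) - z * (Lr : ℂ) = (zt - z) * (Ls : ℂ) + z * ((Ls : ℂ) - (Lr : ℂ)) := by
      ring
    have hk : r * (Ls - Lr) ≤ 2 * (s - r) := key_aux s r hs0' (le_of_lt hr0) hsr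
    have hrs : s - r ≤ ‖z - zt‖ := by
      have : -(r - s) ≤ |r - s| := neg_le_abs _
      linarith [hdiff]
    calc ‖zt * (Ls : ℂ) - z * (Lr : ℂ)‖
        ≤ ‖(zt - z) * (Ls : ℂ)‖ + ‖z * ((Ls : ℂ) - (Lr : ℂ))‖ := by
          rw [hid]; exact norm_add_le _ _
      _ = ‖z - zt‖ * |Ls| + r * |Ls - Lr| := by
          rw [norm_mul, norm_mul, habs, ← Complex.ofReal_sub, Complex.norm_real, Complex.norm_real, Real.norm_eq_abs, Real.norm_eq_abs]
      _ = ‖z - zt‖ * (-Ls) + r * (Ls - Lr) := by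
          rw [abs_of_nonpos hLs0, abs_of_nonneg (by linarith : (0:ℝ) ≤ Ls - Lr)]
      _ ≤ ‖z - zt‖ * (-Lr) + 2 * ‖z - zt‖ := by nlinarith
      _ ≤ ‖z - zt‖ * (6 - Lr) := by nlinarith
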